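/- arXiv:math/0410557 — 2 statements merged into one kernel-verified Lean document; each statement's English description precedes it below -/
import Mathlib

section
/- The functions φ₆, φ₇ : ℝ² → ℝ defined by φ₆(p, q) = p·q²/(1 + p²) + arctan(p) and φ₇(p, q) = q²/(1 + p²) − p·arctan(p) each satisfy the symmetry-determining equation of the two-dimensional minimal surface equation: (1 + p²)·∂²φ/∂p² + 2pq·∂²φ/∂p∂q + (1 + q²)·∂²φ/∂q² = 0 for all (p, q) ∈ ℝ². -/
/-- Partial derivative in the `x` direction of a function on `ℝ²`. -/
noncomputable def px (f : ℝ × ℝ → ℝ) (z : ℝ × ℝ) : ℝ := fderiv ℝ f z (1, 0)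

/-- Partial derivative in the `y` direction of a function on `ℝ²`. -/
noncomputable def py (f : ℝ × ℝ → ℝ) (z : ℝ × ℝ) : ℝ := fderiv ℝ f z (0, 1)


open Real ContinuousLinearMap

lemma den_ne (p : ℝ) : (1 + p^2 : ℝ) ≠ 0 := by positivity

lemma hsq2 (z : ℝ × ℝ) : HasFDerivAt (fun w : ℝ × ℝ => w.2^2)
    ((2*z.2 : ℝ) • snd ℝ ℝ ℝ) z := by
  have h : HasDerivAt (fun x : ℝ => x^2) (2*z.2) z.2 := by
    simpa using hasDerivAt_pow 2 z.2
  exact h.comp_hasFDerivAt z (hasFDerivAt_snd (p := z))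

lemma key (a b c : ℝ → ℝ) {a' b' c' : ℝ} {z : ℝ × ℝ}
    (ha : HasDerivAt a a' z.1) (hb : HasDerivAt b b' z.1) (hc : HasDerivAt c c' z.1) :
    HasFDerivAt (fun w : ℝ × ℝ => c w.1 * w.2^2 + b w.1 * w.2 + a w.1)
      ((c' * z.2^2 + b' * z.2 + a') • fst ℝ ℝ ℝ + (2 * c z.1 * z.2 + b z.1) • snd ℝ ℝ ℝ) z := by
  have h : HasFDerivAt (fun w : ℝ × ℝ => c w.1 * w.2^2 + b w.1 * w.2 + a w.1) _ z := (((hc.comp_hasFDerivAt z (hasFDerivAt_fst (p := z))).mul (hsq2 z)).add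
      ((hb.comp_hasFDerivAt z (hasFDerivAt_fst (p := z))).mul (hasFDerivAt_snd (p := z)))).add
      (ha.comp_hasFDerivAt z (hasFDerivAt_fst (p := z)))
  refine h.congr_fderiv ?_
  refine ContinuousLinearMap.ext fun v => ?_
  simp
  ring

lemma key_px (a b c : ℝ → ℝ) {a' b' c' : ℝ} {z : ℝ × ℝ}
    (ha : HasDerivAt a a' z.1) (hb : HasDerivAt b b' z.1) (hc : HasDerivAt c c' z.1) :
    px (fun w : ℝ × ℝ => c w.1 * w.2^2 + b w.1 * w.2 + a w.1) z = c' * z.2^2 + b' * z.2 + a' := by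
  rw [px, (key a b c ha hb hc).fderiv]; simp

lemma key_py (a b c : ℝ → ℝ) {a' b' c' : ℝ} {z : ℝ × ℝ}
    (ha : HasDerivAt a a' z.1) (hb : HasDerivAt b b' z.1) (hc : HasDerivAt c c' z.1) :
    py (fun w : ℝ × ℝ => c w.1 * w.2^2 + b w.1 * w.2 + a w.1) z = 2 * c z.1 * z.2 + b z.1 := by
  rw [py, (key a b c ha hb hc).fderiv]; simp

-- one-variable derivative lemmas
lemma hden1 (p : ℝ) : HasDerivAt (fun x : ℝ => 1 + x^2) (2*p) p := by
  have h : HasDerivAt (fun x : ℝ => 1 + x^2) _ p := (hasDerivAt_const p (1:ℝ)).add (hasDerivAt_pow 2 p)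
  simpa using h

lemma h0 (p : ℝ) : HasDerivAt (fun _ : ℝ => (0:ℝ)) 0 p := hasDerivAt_const p 0

lemma hc6 (p : ℝ) : HasDerivAt (fun x : ℝ => x/(1+x^2)) ((1-p^2)/(1+p^2)^2) p := by
  have : HasDerivAt (fun x : ℝ => x/(1+x^2)) _ p := (hasDerivAt_id p).div (hden1 p) (den_ne p)
  convert this using 1
  field_simp; simp only [id]; ring

lemma hc1 (p : ℝ) : HasDerivAt (fun x : ℝ => (1-x^2)/(1+x^2)^2) ((2*p^3-6*p)/(1+p^2)^3) p := by
  have hnum : HasDerivAt (fun x : ℝ => 1 - x^2) (-(2*p)) p := by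
    have h : HasDerivAt (fun x : ℝ => 1 - x^2) _ p := (hasDerivAt_const p (1:ℝ)).sub ((hasDerivAt_pow 2 p))
    simpa using h
  have hd2 : HasDerivAt (fun x : ℝ => (1+x^2)^2) (2*(1+p^2)*(2*p)) p := by
    have : HasDerivAt (fun x : ℝ => (1+x^2)^2) _ p := (hden1 p).pow 2
    convert this using 1; ring
  have : HasDerivAt (fun x : ℝ => (1-x^2)/(1+x^2)^2) _ p := hnum.div hd2 (pow_ne_zero 2 (den_ne p))
  convert this using 1
  field_simp; ring

lemma ha1 (p : ℝ) : HasDerivAt (fun x : ℝ => 1/(1+x^2)) (-(2*p)/(1+p^2)^2) p := by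
  have : HasDerivAt (fun x : ℝ => 1/(1+x^2)) _ p := (hasDerivAt_const p (1:ℝ)).div (hden1 p) (den_ne p)
  convert this using 1
  field_simp; ring

lemma hb6 (p : ℝ) : HasDerivAt (fun x : ℝ => 2*x/(1+x^2)) ((2-2*p^2)/(1+p^2)^2) p := by
  have : HasDerivAt (fun x : ℝ => 2*x/(1+x^2)) _ p := ((hasDerivAt_id p).const_mul (2:ℝ)).div (hden1 p) (den_ne p)
  convert this using 1
  field_simp; simp only [id]; ring

lemma hb7 (p : ℝ) : HasDerivAt (fun x : ℝ => 2/(1+x^2)) (-(4*p)/(1+p^2)^2) p := by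
  have : HasDerivAt (fun x : ℝ => 2/(1+x^2)) _ p := (hasDerivAt_const p (2:ℝ)).div (hden1 p) (den_ne p)
  convert this using 1
  field_simp; ring

lemma ha7 (p : ℝ) : HasDerivAt (fun x : ℝ => -(x * Real.arctan x))
    (-(Real.arctan p) - p/(1+p^2)) p := by
  have : HasDerivAt (fun x : ℝ => -(x * Real.arctan x)) _ p := ((hasDerivAt_id p).mul (Real.hasDerivAt_arctan p)).neg
  convert this using 1
  field_simp; simp only [id]; ring

lemma hc2 (p : ℝ) : HasDerivAt (fun x : ℝ => -(2*x)/(1+x^2)^2) ((6*p^2-2)/(1+p^2)^3) p := by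
  have hnum : HasDerivAt (fun x : ℝ => -(2*x)) (-2 : ℝ) p := by
    have h : HasDerivAt (fun x : ℝ => -(2*x)) _ p := ((hasDerivAt_id p).const_mul (2:ℝ)).neg
    simpa using h
  have hd2 : HasDerivAt (fun x : ℝ => (1+x^2)^2) (2*(1+p^2)*(2*p)) p := by
    have : HasDerivAt (fun x : ℝ => (1+x^2)^2) _ p := (hden1 p).pow 2
    convert this using 1; ring
  have : HasDerivAt (fun x : ℝ => -(2*x)/(1+x^2)^2) _ p := hnum.div hd2 (pow_ne_zero 2 (den_ne p))
  convert this using 1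
  field_simp; ring

lemma ha2 (p : ℝ) : HasDerivAt (fun x : ℝ => -(Real.arctan x) - x/(1+x^2))
    (-(1/(1+p^2)) - (1-p^2)/(1+p^2)^2) p :=
  ((Real.hasDerivAt_arctan p).neg).sub (hc6 p)


/-- The degree-2 contact symmetries `φ₆(p,q) = pq²/(1 + p²) + arctan p` and
`φ₇(p,q) = q²/(1 + p²) − p·arctan p` of the two-dimensional minimal surface
equation both satisfy the determining equation
`(1 + p²)φ_pp + 2pq·φ_pq + (1 + q²)φ_qq = 0`. -/
theorem phi6_phi7_satisfy_determining_equation :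
    (∀ z : ℝ × ℝ,
      (1 + z.1 ^ 2)
          * px (px (fun w : ℝ × ℝ => w.1 * w.2 ^ 2 / (1 + w.1 ^ 2) + Real.arctan w.1)) z
        + 2 * z.1 * z.2
          * py (px (fun w : ℝ × ℝ => w.1 * w.2 ^ 2 / (1 + w.1 ^ 2) + Real.arctan w.1)) z
        + (1 + z.2 ^ 2)
          * py (py (fun w : ℝ × ℝ => w.1 * w.2 ^ 2 / (1 + w.1 ^ 2) + Real.arctan w.1)) z
        = 0)
    ∧ (∀ z : ℝ × ℝ,
      (1 + z.1 ^ 2)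
          * px (px (fun w : ℝ × ℝ => w.2 ^ 2 / (1 + w.1 ^ 2) - w.1 * Real.arctan w.1)) z
        + 2 * z.1 * z.2
          * py (px (fun w : ℝ × ℝ => w.2 ^ 2 / (1 + w.1 ^ 2) - w.1 * Real.arctan w.1)) z
        + (1 + z.2 ^ 2)
          * py (py (fun w : ℝ × ℝ => w.2 ^ 2 / (1 + w.1 ^ 2) - w.1 * Real.arctan w.1)) z
        = 0) := by
  constructor <;> intro z
  · -- φ₆
    rw [show (fun w : ℝ × ℝ => w.1 * w.2 ^ 2 / (1 + w.1 ^ 2) + Real.arctan w.1)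
        = (fun w : ℝ × ℝ => (fun x : ℝ => x/(1+x^2)) w.1 * w.2^2
            + (fun _ : ℝ => (0:ℝ)) w.1 * w.2 + Real.arctan w.1) from
      funext fun w => by simp only; ring]
    rw [show px (fun w : ℝ × ℝ => (fun x : ℝ => x/(1+x^2)) w.1 * w.2^2
            + (fun _ : ℝ => (0:ℝ)) w.1 * w.2 + Real.arctan w.1)
        = (fun z : ℝ × ℝ => (fun x : ℝ => (1-x^2)/(1+x^2)^2) z.1 * z.2^2
            + (fun _ : ℝ => (0:ℝ)) z.1 * z.2 + (fun x : ℝ => 1/(1+x^2)) z.1) from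
      funext fun z => by
        rw [key_px _ _ _ (Real.hasDerivAt_arctan z.1) (h0 z.1) (hc6 z.1)]]
    rw [show py (fun w : ℝ × ℝ => (fun x : ℝ => x/(1+x^2)) w.1 * w.2^2
            + (fun _ : ℝ => (0:ℝ)) w.1 * w.2 + Real.arctan w.1)
        = (fun z : ℝ × ℝ => (fun _ : ℝ => (0:ℝ)) z.1 * z.2^2
            + (fun x : ℝ => 2*x/(1+x^2)) z.1 * z.2 + (fun _ : ℝ => (0:ℝ)) z.1) from
      funext fun z => by
        rw [key_py _ _ _ (Real.hasDerivAt_arctan z.1) (h0 z.1) (hc6 z.1)]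
        simp only; ring]
    rw [key_px _ _ _ (ha1 z.1) (h0 z.1) (hc1 z.1),
        key_py _ _ _ (ha1 z.1) (h0 z.1) (hc1 z.1),
        key_py _ _ _ (h0 z.1) (hb6 z.1) (h0 z.1)]
    field_simp
    ring
  · -- φ₇
    rw [show (fun w : ℝ × ℝ => w.2 ^ 2 / (1 + w.1 ^ 2) - w.1 * Real.arctan w.1)
        = (fun w : ℝ × ℝ => (fun x : ℝ => 1/(1+x^2)) w.1 * w.2^2
            + (fun _ : ℝ => (0:ℝ)) w.1 * w.2 + (fun x : ℝ => -(x * Real.arctan x)) w.1) from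
      funext fun w => by simp only; ring]
    rw [show px (fun w : ℝ × ℝ => (fun x : ℝ => 1/(1+x^2)) w.1 * w.2^2
            + (fun _ : ℝ => (0:ℝ)) w.1 * w.2 + (fun x : ℝ => -(x * Real.arctan x)) w.1)
        = (fun z : ℝ × ℝ => (fun x : ℝ => -(2*x)/(1+x^2)^2) z.1 * z.2^2
            + (fun _ : ℝ => (0:ℝ)) z.1 * z.2
            + (fun x : ℝ => -(Real.arctan x) - x/(1+x^2)) z.1) from
      funext fun z => by
        rw [key_px _ _ _ (ha7 z.1) (h0 z.1) (ha1 z.1)]]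
    rw [show py (fun w : ℝ × ℝ => (fun x : ℝ => 1/(1+x^2)) w.1 * w.2^2
            + (fun _ : ℝ => (0:ℝ)) w.1 * w.2 + (fun x : ℝ => -(x * Real.arctan x)) w.1)
        = (fun z : ℝ × ℝ => (fun _ : ℝ => (0:ℝ)) z.1 * z.2^2
            + (fun x : ℝ => 2/(1+x^2)) z.1 * z.2 + (fun _ : ℝ => (0:ℝ)) z.1) from
      funext fun z => by
        rw [key_py _ _ _ (ha7 z.1) (h0 z.1) (ha1 z.1)]
        simp only; ring]
    rw [key_px _ _ _ (ha2 z.1) (h0 z.1) (hc2 z.1),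
        key_py _ _ _ (ha2 z.1) (h0 z.1) (hc2 z.1),
        key_py _ _ _ (h0 z.1) (hb7 z.1) (h0 z.1)]
    field_simp
    ring
end

section
/- The functions φ₈, φ₉ : ℝ² → ℝ defined by φ₈(p, q) = p·q³/(1 + p²)² + (3/2)·p·q/(1 + p²) and φ₉(p, q) = (p² − 1)·q³/(1 + p²)² − 3q/(1 + p²) each satisfy the symmetry-determining equation of the two-dimensional minimal surface equation: (1 + p²)·∂²φ/∂p² + 2pq·∂²φ/∂p∂q + (1 + q²)·∂²φ/∂q² = 0 for all (p, q) ∈ ℝ². -/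
section helpers

variable (A B A' B' : ℝ → ℝ)

private lemma hasFD (hA : ∀ p, HasDerivAt A (A' p) p) (hB : ∀ p, HasDerivAt B (B' p) p)
    (z : ℝ × ℝ) :
    HasFDerivAt (fun w : ℝ × ℝ => A w.1 * w.2 ^ 3 + B w.1 * w.2)
      ((A' z.1 • ContinuousLinearMap.fst ℝ ℝ ℝ).smulRight (z.2 ^ 3)
        + ((((3 : ℕ) : ℝ) * z.2 ^ 2) • ContinuousLinearMap.snd ℝ ℝ ℝ).smulRight (A z.1)
        + ((B' z.1 • ContinuousLinearMap.fst ℝ ℝ ℝ).smulRight z.2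
          + (ContinuousLinearMap.snd ℝ ℝ ℝ).smulRight (B z.1))) z := by
  have h1 : HasFDerivAt (fun w : ℝ × ℝ => A w.1)
      (A' z.1 • ContinuousLinearMap.fst ℝ ℝ ℝ) z :=
    (hA z.1).comp_hasFDerivAt z (hasFDerivAt_fst (p := z))
  have h2 : HasFDerivAt (fun w : ℝ × ℝ => w.2 ^ 3)
      ((((3 : ℕ) : ℝ) * z.2 ^ 2) • ContinuousLinearMap.snd ℝ ℝ ℝ) z :=
    (hasDerivAt_pow 3 z.2).comp_hasFDerivAt z (hasFDerivAt_snd (p := z))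
  have h3 : HasFDerivAt (fun w : ℝ × ℝ => B w.1)
      (B' z.1 • ContinuousLinearMap.fst ℝ ℝ ℝ) z :=
    (hB z.1).comp_hasFDerivAt z (hasFDerivAt_fst (p := z))
  have h : HasFDerivAt (fun w : ℝ × ℝ => A w.1 * w.2 ^ 3 + B w.1 * w.2) _ z :=
    (h1.mul h2).add (h3.mul (hasFDerivAt_snd (p := z)))
  refine h.congr_fderiv ?_
  ext
  · simp [mul_comm]
  · simp [mul_comm]

private lemma px_cubic (hA : ∀ p, HasDerivAt A (A' p) p) (hB : ∀ p, HasDerivAt B (B' p) p) :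
    px (fun w : ℝ × ℝ => A w.1 * w.2 ^ 3 + B w.1 * w.2)
      = fun z => A' z.1 * z.2 ^ 3 + B' z.1 * z.2 := by
  funext z
  rw [px, (hasFD A B A' B' hA hB z).fderiv]
  simp

private lemma py_cubic (hA : ∀ p, HasDerivAt A (A' p) p) (hB : ∀ p, HasDerivAt B (B' p) p) :
    py (fun w : ℝ × ℝ => A w.1 * w.2 ^ 3 + B w.1 * w.2)
      = fun z => 3 * A z.1 * z.2 ^ 2 + B z.1 := by
  funext z
  rw [py, (hasFD A B A' B' hA hB z).fderiv]
  simp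
  ring

private lemma py_quad (hA : ∀ p, HasDerivAt A (A' p) p) (hB : ∀ p, HasDerivAt B (B' p) p) :
    py (fun w : ℝ × ℝ => 3 * A w.1 * w.2 ^ 2 + B w.1)
      = fun z => 6 * A z.1 * z.2 := by
  funext z
  have h1 : HasFDerivAt (fun w : ℝ × ℝ => 3 * A w.1)
      ((3 * A' z.1) • ContinuousLinearMap.fst ℝ ℝ ℝ) z :=
    ((hA z.1).const_mul 3).comp_hasFDerivAt z (hasFDerivAt_fst (p := z))
  have h2 : HasFDerivAt (fun w : ℝ × ℝ => w.2 ^ 2)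
      ((((2 : ℕ) : ℝ) * z.2 ^ 1) • ContinuousLinearMap.snd ℝ ℝ ℝ) z :=
    (hasDerivAt_pow 2 z.2).comp_hasFDerivAt z (hasFDerivAt_snd (p := z))
  have h3 : HasFDerivAt (fun w : ℝ × ℝ => B w.1)
      (B' z.1 • ContinuousLinearMap.fst ℝ ℝ ℝ) z :=
    (hB z.1).comp_hasFDerivAt z (hasFDerivAt_fst (p := z))
  have h : HasFDerivAt (fun w : ℝ × ℝ => 3 * A w.1 * w.2 ^ 2 + B w.1) _ z := (h1.mul h2).add h3
  rw [py, h.fderiv]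
  simp
  ring

end helpers

private lemma one_add_sq_ne (p : ℝ) : (1 : ℝ) + p ^ 2 ≠ 0 := by positivity

/- One-variable derivative facts for φ₈. -/
private lemma hA8 : ∀ p : ℝ, HasDerivAt (fun p : ℝ => p / (1 + p ^ 2) ^ 2)
    ((1 - 3 * p ^ 2) / (1 + p ^ 2) ^ 3) p := by
  intro p
  have h : HasDerivAt (fun p : ℝ => p / (1 + p ^ 2) ^ 2) _ p := (hasDerivAt_id p).div (((hasDerivAt_pow 2 p).const_add 1).pow 2)
    (pow_ne_zero _ (one_add_sq_ne p))
  convert h using 1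
  have := one_add_sq_ne p
  simp only [id, Pi.mul_apply]
  field_simp
  ring

private lemma hA8' : ∀ p : ℝ, HasDerivAt (fun p : ℝ => (1 - 3 * p ^ 2) / (1 + p ^ 2) ^ 3)
    (12 * p * (p ^ 2 - 1) / (1 + p ^ 2) ^ 4) p := by
  intro p
  have h : HasDerivAt (fun p : ℝ => (1 - 3 * p ^ 2) / (1 + p ^ 2) ^ 3) _ p := (((hasDerivAt_pow 2 p).const_mul 3).const_sub 1).div
    (((hasDerivAt_pow 2 p).const_add 1).pow 3) (pow_ne_zero _ (one_add_sq_ne p))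
  convert h using 1
  have := one_add_sq_ne p
  field_simp
  ring

private lemma hB8 : ∀ p : ℝ, HasDerivAt (fun p : ℝ => 3 / 2 * p / (1 + p ^ 2))
    (3 / 2 * (1 - p ^ 2) / (1 + p ^ 2) ^ 2) p := by
  intro p
  have h : HasDerivAt (fun p : ℝ => 3 / 2 * p / (1 + p ^ 2)) _ p := ((hasDerivAt_id p).const_mul (3 / 2 : ℝ)).div
    ((hasDerivAt_pow 2 p).const_add 1) (by positivity)
  convert h using 1
  have := one_add_sq_ne p
  simp only [id, Pi.mul_apply]
  field_simp
  ring

private lemma hB8' : ∀ p : ℝ, HasDerivAt (fun p : ℝ => 3 / 2 * (1 - p ^ 2) / (1 + p ^ 2) ^ 2)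
    (3 * p * (p ^ 2 - 3) / (1 + p ^ 2) ^ 3) p := by
  intro p
  have h : HasDerivAt (fun p : ℝ => 3 / 2 * (1 - p ^ 2) / (1 + p ^ 2) ^ 2) _ p := (((hasDerivAt_pow 2 p).const_sub 1).const_mul (3 / 2 : ℝ)).div
    (((hasDerivAt_pow 2 p).const_add 1).pow 2) (pow_ne_zero _ (one_add_sq_ne p))
  convert h using 1
  have := one_add_sq_ne p
  field_simp
  ring

/- One-variable derivative facts for φ₉. -/
private lemma hA9 : ∀ p : ℝ, HasDerivAt (fun p : ℝ => (p ^ 2 - 1) / (1 + p ^ 2) ^ 2)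
    (2 * p * (3 - p ^ 2) / (1 + p ^ 2) ^ 3) p := by
  intro p
  have h : HasDerivAt (fun p : ℝ => (p ^ 2 - 1) / (1 + p ^ 2) ^ 2) _ p := ((hasDerivAt_pow 2 p).sub_const 1).div
    (((hasDerivAt_pow 2 p).const_add 1).pow 2) (pow_ne_zero _ (one_add_sq_ne p))
  convert h using 1
  have := one_add_sq_ne p
  field_simp
  ring

private lemma hA9' : ∀ p : ℝ, HasDerivAt (fun p : ℝ => 2 * p * (3 - p ^ 2) / (1 + p ^ 2) ^ 3)
    ((6 * p ^ 4 - 36 * p ^ 2 + 6) / (1 + p ^ 2) ^ 4) p := by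
  intro p
  have h : HasDerivAt (fun p : ℝ => 2 * p * (3 - p ^ 2) / (1 + p ^ 2) ^ 3) _ p := (((hasDerivAt_id p).const_mul 2).mul
      ((hasDerivAt_pow 2 p).const_sub 3)).div
    (((hasDerivAt_pow 2 p).const_add 1).pow 3) (pow_ne_zero _ (one_add_sq_ne p))
  convert h using 1
  have := one_add_sq_ne p
  simp only [id, Pi.mul_apply]
  field_simp
  ring

private lemma hB9 : ∀ p : ℝ, HasDerivAt (fun p : ℝ => -3 / (1 + p ^ 2))
    (6 * p / (1 + p ^ 2) ^ 2) p := by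
  intro p
  have h : HasDerivAt (fun p : ℝ => -3 / (1 + p ^ 2)) _ p := (hasDerivAt_const p (-3 : ℝ)).div
    ((hasDerivAt_pow 2 p).const_add 1) (by positivity)
  convert h using 1
  have := one_add_sq_ne p
  field_simp
  ring

private lemma hB9' : ∀ p : ℝ, HasDerivAt (fun p : ℝ => 6 * p / (1 + p ^ 2) ^ 2)
    ((6 - 18 * p ^ 2) / (1 + p ^ 2) ^ 3) p := by
  intro p
  have h : HasDerivAt (fun p : ℝ => 6 * p / (1 + p ^ 2) ^ 2) _ p := ((hasDerivAt_id p).const_mul 6).div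
    (((hasDerivAt_pow 2 p).const_add 1).pow 2) (pow_ne_zero _ (one_add_sq_ne p))
  convert h using 1
  have := one_add_sq_ne p
  simp only [id, Pi.mul_apply]
  field_simp
  ring

/-- The degree-3 contact symmetries `φ₈(p,q) = pq³/(1 + p²)² + (3/2)·pq/(1 + p²)`
and `φ₉(p,q) = (p² − 1)q³/(1 + p²)² − 3q/(1 + p²)` of the two-dimensional minimal
surface equation both satisfy the determining equation
`(1 + p²)φ_pp + 2pq·φ_pq + (1 + q²)φ_qq = 0`. -/
theorem phi8_phi9_satisfy_determining_equation :
    (∀ z : ℝ × ℝ,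
      (1 + z.1 ^ 2)
          * px (px (fun w : ℝ × ℝ =>
              w.1 * w.2 ^ 3 / (1 + w.1 ^ 2) ^ 2 + (3 / 2) * (w.1 * w.2) / (1 + w.1 ^ 2))) z
        + 2 * z.1 * z.2
          * py (px (fun w : ℝ × ℝ =>
              w.1 * w.2 ^ 3 / (1 + w.1 ^ 2) ^ 2 + (3 / 2) * (w.1 * w.2) / (1 + w.1 ^ 2))) z
        + (1 + z.2 ^ 2)
          * py (py (fun w : ℝ × ℝ =>
              w.1 * w.2 ^ 3 / (1 + w.1 ^ 2) ^ 2 + (3 / 2) * (w.1 * w.2) / (1 + w.1 ^ 2))) z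
        = 0)
    ∧ (∀ z : ℝ × ℝ,
      (1 + z.1 ^ 2)
          * px (px (fun w : ℝ × ℝ =>
              (w.1 ^ 2 - 1) * w.2 ^ 3 / (1 + w.1 ^ 2) ^ 2 - 3 * w.2 / (1 + w.1 ^ 2))) z
        + 2 * z.1 * z.2
          * py (px (fun w : ℝ × ℝ =>
              (w.1 ^ 2 - 1) * w.2 ^ 3 / (1 + w.1 ^ 2) ^ 2 - 3 * w.2 / (1 + w.1 ^ 2))) z
        + (1 + z.2 ^ 2)
          * py (py (fun w : ℝ × ℝ =>
              (w.1 ^ 2 - 1) * w.2 ^ 3 / (1 + w.1 ^ 2) ^ 2 - 3 * w.2 / (1 + w.1 ^ 2))) z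
        = 0) := by
  constructor
  · -- φ₈
    have e0 : (fun w : ℝ × ℝ =>
        w.1 * w.2 ^ 3 / (1 + w.1 ^ 2) ^ 2 + (3 / 2) * (w.1 * w.2) / (1 + w.1 ^ 2))
        = fun w : ℝ × ℝ =>
          (fun p : ℝ => p / (1 + p ^ 2) ^ 2) w.1 * w.2 ^ 3
            + (fun p : ℝ => 3 / 2 * p / (1 + p ^ 2)) w.1 * w.2 := by
      funext w
      have := one_add_sq_ne w.1
      field_simp
    have epx := px_cubic _ _ _ _ hA8 hB8
    have epy := py_cubic _ _ _ _ hA8 hB8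
    have epxpx := px_cubic _ _ _ _ hA8' hB8'
    have epypx := py_cubic _ _ _ _ hA8' hB8'
    have epypy := py_quad _ _ _ _ hA8 hB8
    intro z
    rw [e0, epx, epy, epxpx, epypx, epypy]
    have := one_add_sq_ne z.1
    field_simp
    ring
  · -- φ₉
    have e0 : (fun w : ℝ × ℝ =>
        (w.1 ^ 2 - 1) * w.2 ^ 3 / (1 + w.1 ^ 2) ^ 2 - 3 * w.2 / (1 + w.1 ^ 2))
        = fun w : ℝ × ℝ =>
          (fun p : ℝ => (p ^ 2 - 1) / (1 + p ^ 2) ^ 2) w.1 * w.2 ^ 3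
            + (fun p : ℝ => -3 / (1 + p ^ 2)) w.1 * w.2 := by
      funext w
      have := one_add_sq_ne w.1
      field_simp
      ring
    have epx := px_cubic _ _ _ _ hA9 hB9
    have epy := py_cubic _ _ _ _ hA9 hB9
    have epxpx := px_cubic _ _ _ _ hA9' hB9'
    have epypx := py_cubic _ _ _ _ hA9' hB9'
    have epypy := py_quad _ _ _ _ hA9 hB9
    intro z
    rw [e0, epx, epy, epxpx, epypx, epypy]
    have := one_add_sq_ne z.1
    field_simp
    ring
end
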